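/- arXiv:2311.08609 — 3 statements merged into one kernel-verified Lean document; each statement's English description precedes it below -/
import Mathlib

section
/- Let X be a topological space equipped with a CW-complex structure. Then every compact subset of X intersects only finitely many of the (open) cells of X. -/
open Topology Filter


open Metric

/-- A CW-complex structure on a topological space `X` (the classical definition): a family of
cells in each dimension `n`, each given by a characteristic map from the closed unit ball of
`ℝⁿ` which is continuous with continuous inverse (a homeomorphism onto its image on the open
ball), such that the open cells are pairwise disjoint and partition `X`, the boundary sphere of
each cell is mapped into finitely many cells of lower dimension, and `X` carries the weak
topology with respect to the closed cells. -/
structure CWStructure (X : Type) [TopologicalSpace X] where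
  /-- The indexing type of the `n`-cells. -/
  cell (n : ℕ) : Type
  /-- The characteristic map of each `n`-cell, defined on the closed unit ball of `ℝⁿ`. -/
  map (n : ℕ) (i : cell n) : PartialEquiv (Fin n → ℝ) X
  source_eq (n : ℕ) (i : cell n) : (map n i).source = closedBall 0 1
  continuousOn (n : ℕ) (i : cell n) : ContinuousOn (map n i) (closedBall 0 1)
  continuousOn_symm (n : ℕ) (i : cell n) : ContinuousOn (map n i).symm (map n i).target
  pairwiseDisjoint' :
    (Set.univ : Set (Σ n, cell n)).PairwiseDisjoint fun ni => map ni.1 ni.2 '' ball 0 1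
  mapsTo (n : ℕ) (i : cell n) : ∃ I : ∀ m, Finset (cell m),
    Set.MapsTo (map n i) (sphere 0 1)
      (⋃ (m : ℕ) (_ : m < n), ⋃ j ∈ I m, map m j '' closedBall 0 1)
  closed' (A : Set X) :
    (∀ (n : ℕ) (j : cell n), IsClosed (A ∩ map n j '' closedBall 0 1)) → IsClosed A
  union' : ⋃ (n : ℕ), ⋃ (j : cell n), map n j '' closedBall 0 1 = Set.univ

/-- Any set meeting each open cell in a subsingleton is closed. -/
theorem CWStructure.aux_closed {X : Type} [TopologicalSpace X] [T2Space X]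
    (hX : CWStructure X) (S : Set X)
    (hS : ∀ (n : ℕ) (j : hX.cell n), (S ∩ hX.map n j '' ball 0 1).Subsingleton) :
    IsClosed S := by
  apply hX.closed'
  intro n
  induction n using Nat.strong_induction_on with
  | _ n ih =>
    intro j
    have hsc : IsCompact (hX.map n j '' sphere 0 1) :=
      (isCompact_sphere 0 1).image_of_continuousOn
        ((hX.continuousOn n j).mono sphere_subset_closedBall)
    obtain ⟨I, hI⟩ := hX.mapsTo n j
    have hlower : IsClosed (⋃ m ∈ Set.Iio n, ⋃ i ∈ I m, S ∩ hX.map m i '' closedBall 0 1) := by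
      refine (Set.finite_Iio n).isClosed_biUnion fun m hm => ?_
      exact (I m).finite_toSet.isClosed_biUnion fun i _ => ih m hm i
    have key : S ∩ hX.map n j '' closedBall 0 1 =
        (S ∩ hX.map n j '' ball 0 1) ∪
        ((⋃ m ∈ Set.Iio n, ⋃ i ∈ I m, S ∩ hX.map m i '' closedBall 0 1) ∩
          hX.map n j '' sphere 0 1) := by
      apply Set.Subset.antisymm
      · rintro x ⟨hxS, y, hy, rfl⟩
        have hy' : y ∈ ball (0 : Fin n → ℝ) 1 ∪ sphere 0 1 := by
          rw [ball_union_sphere]; exact hy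
        rcases hy' with hyb | hys
        · exact Or.inl ⟨hxS, y, hyb, rfl⟩
        · refine Or.inr ⟨?_, y, hys, rfl⟩
          have := hI hys
          simp only [Set.mem_iUnion] at this ⊢
          obtain ⟨m, hm, i, hi, hx⟩ := this
          exact ⟨m, hm, i, hi, hxS, hx⟩
      · rintro x (⟨hxS, hx⟩ | ⟨hx, hxs⟩)
        · exact ⟨hxS, Set.image_mono ball_subset_closedBall hx⟩
        · simp only [Set.mem_iUnion] at hx
          obtain ⟨m, hm, i, hi, hxS, -⟩ := hx
          exact ⟨hxS, Set.image_mono sphere_subset_closedBall hxs⟩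
    rw [key]
    exact ((hS n j).finite.isClosed).union (hlower.inter hsc.isClosed)

/-- In a CW complex, every compact subset intersects only finitely many open cells. -/
theorem CWStructure.compact_inter_finite {X : Type} [TopologicalSpace X] [T2Space X]
    (hX : CWStructure X) (K : Set X) (hK : IsCompact K) :
    {p : Σ n, hX.cell n | (K ∩ hX.map p.1 p.2 '' ball 0 1).Nonempty}.Finite := by
  set T := {p : Σ n, hX.cell n | (K ∩ hX.map p.1 p.2 '' ball 0 1).Nonempty} with hT
  choose f hf using fun p : T => (p.2 : (K ∩ hX.map p.1.1 p.1.2 '' ball 0 1).Nonempty)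
  have hfK : ∀ p, f p ∈ K := fun p => (hf p).1
  have hfcell : ∀ p : T, f p ∈ hX.map p.1.1 p.1.2 '' ball 0 1 := fun p => (hf p).2
  -- the unique cell containing a point of the range
  have cell_eq : ∀ (p : T) (n : ℕ) (j : hX.cell n),
      f p ∈ hX.map n j '' ball 0 1 → p.1 = ⟨n, j⟩ := by
    intro p n j hmem
    by_contra hne
    have := hX.pairwiseDisjoint' (Set.mem_univ p.1) (Set.mem_univ ⟨n, j⟩) hne
    exact this.le_bot ⟨hfcell p, hmem⟩ |>.elim
  -- any subset of the range meets each open cell in a subsingleton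
  have hsub : ∀ S : Set X, S ⊆ Set.range f → ∀ (n : ℕ) (j : hX.cell n),
      (S ∩ hX.map n j '' ball 0 1).Subsingleton := by
    intro S hSr n j x hx y hy
    obtain ⟨p, rfl⟩ := hSr hx.1
    obtain ⟨q, rfl⟩ := hSr hy.1
    have hp := cell_eq p n j hx.2
    have hq := cell_eq q n j hy.2
    have : p = q := Subtype.ext (hp.trans hq.symm)
    rw [this]
  -- the range is closed and discrete, hence finite
  have hclosed : ∀ S : Set X, S ⊆ Set.range f → IsClosed S :=
    fun S hSr => hX.aux_closed S (hsub S hSr)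
  have hcomp : IsCompact (Set.range f) :=
    hK.of_isClosed_subset (hclosed _ le_rfl) (Set.range_subset_iff.2 hfK)
  have hdisc : DiscreteTopology (Set.range f) := by
    rw [discreteTopology_subtype_iff]
    intro x hx
    have h2 : IsClosed (Set.range f \ {x}) := hclosed _ Set.diff_subset
    have h3 : x ∉ Set.range f \ {x} := fun h => h.2 rfl
    have h1 : 𝓝[Set.range f \ {x}] x = ⊥ := by
      rw [← notMem_closure_iff_nhdsWithin_eq_bot, h2.closure_eq]; exact h3
    calc 𝓝[≠] x ⊓ Filter.principal (Set.range f)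
        = 𝓝[{x}ᶜ ∩ Set.range f] x := (nhdsWithin_inter' x _ _).symm
      _ = 𝓝[Set.range f \ {x}] x := by rw [Set.inter_comm, ← Set.diff_eq]
      _ = ⊥ := h1
  have hfin : (Set.range f).Finite := hcomp.finite (isDiscrete_iff_discreteTopology.mpr hdisc)
  -- transfer finiteness along the injective map f
  have hinj : Function.Injective f := by
    intro p q hpq
    have h := cell_eq p (↑q : Σ n, hX.cell n).1 (↑q : Σ n, hX.cell n).2
      (hpq.symm ▸ hfcell q)
    exact Subtype.ext (h.trans (Sigma.eta _))
  rw [← Set.finite_coe_iff]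
  have : Finite (Set.range f) := hfin
  exact Finite.of_injective (fun p => (⟨f p, Set.mem_range_self p⟩ : Set.range f))
    fun p q h => hinj (congrArg Subtype.val h)
end

section
/- Let m be a natural number and let G = ℂᵐ ⋊ ℂˣ be the semidirect product of the additive group ℂᵐ by the multiplicative group ℂˣ, where t ∈ ℂˣ acts on ℂᵐ by coordinatewise scalar multiplication. Then the projection homomorphism G → ℂˣ induces an isomorphism from the abelianization of G onto ℂˣ. -/
/-- The homomorphism `G →* MulAut (Multiplicative A)` arising from a distributive action of
`G` on an additive group `A`. -/
def distribToMulAut (G A : Type*) [Group G] [AddGroup A] [DistribMulAction G A] :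
    G →* MulAut (Multiplicative A) where
  toFun g := AddEquiv.toMultiplicative (DistribMulAction.toAddAut G A g)
  map_one' := by
    ext x
    show Multiplicative.ofAdd ((1 : G) • x.toAdd) = x
    simp
  map_mul' g h := by
    ext x
    show Multiplicative.ofAdd ((g * h) • x.toAdd) = Multiplicative.ofAdd (g • h • x.toAdd)
    rw [mul_smul]

/-- The group `ℂᵐ ⋊ ℂˣ`, where `ℂˣ` acts by coordinatewise scalar multiplication. -/
abbrev CmSemidirect (m : ℕ) : Type :=
  Multiplicative (Fin m → ℂ) ⋊[distribToMulAut ℂˣ (Fin m → ℂ)] ℂˣ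

open scoped commutatorElement

/-- The projection `ℂᵐ ⋊ ℂˣ → ℂˣ` induces an isomorphism from the abelianization of
`ℂᵐ ⋊ ℂˣ` onto `ℂˣ`. -/
theorem abelianization_CmSemidirect (m : ℕ) :
    Function.Bijective
      ⇑(Abelianization.lift (SemidirectProduct.rightHom : CmSemidirect m →* ℂˣ)) := by
  constructor
  · rw [injective_iff_map_eq_one]
    intro x hx
    induction x using QuotientGroup.induction_on with
    | _ g =>
      replace hx : SemidirectProduct.rightHom g = (1:ℂˣ) := hx
      have hg : g = SemidirectProduct.inl g.left := by
        ext
        · rfl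
        · simpa using hx
      have key : SemidirectProduct.inl (φ := distribToMulAut ℂˣ (Fin m → ℂ)) g.left =
          ⁅SemidirectProduct.inr (φ := distribToMulAut ℂˣ (Fin m → ℂ))
              (Units.mk0 2 two_ne_zero), SemidirectProduct.inl g.left⁆ := by
        rw [commutatorElement_def, show ((SemidirectProduct.inr (φ := distribToMulAut ℂˣ (Fin m → ℂ)) (Units.mk0 2 two_ne_zero))⁻¹ : CmSemidirect m) = SemidirectProduct.inr (Units.mk0 2 two_ne_zero)⁻¹ from (map_inv _ _).symm,
          ← SemidirectProduct.inl_aut, ← map_inv, ← map_mul]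
        congr 1
        show g.left = Multiplicative.ofAdd ((Units.mk0 (2:ℂ) two_ne_zero) • g.left.toAdd)
          * g.left⁻¹
        have : (Units.mk0 (2:ℂ) two_ne_zero) • g.left.toAdd =
            g.left.toAdd + g.left.toAdd := by
          funext i
          show (2 : ℂ) * g.left.toAdd i = g.left.toAdd i + g.left.toAdd i
          ring
        rw [this, ofAdd_add]
        simp
      show Abelianization.of g = 1
      rw [hg, key, map_commutatorElement Abelianization.of _ _]
      exact commutatorElement_eq_one_iff_commute.mpr (mul_comm _ _)
  · intro t
    exact ⟨Abelianization.of (SemidirectProduct.inr t), by simp⟩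
end

section
/- Let r ≥ 1 and let 𝔑 ⊆ ℝʳ be a closed convex polytope of dimension r (the convex hull of a finite set whose affine span is all of ℝʳ). Suppose 𝔑 = ⋃_{i ∈ I} N_i is a decomposition into finitely many convex polytopes N_i (convex hulls of finite sets), each of dimension r, with pairwise disjoint (topological) interiors, and suppose that for any two indices i, j such that N_i ∩ N_j has dimension r − 1, the set N_i ∩ N_j is a face (extreme subset) of both N_i and N_j. Then for any face F₁ of some chamber N_i and any face F₂ of some chamber N_j, the intersection F₁ ∩ F₂ is a face (extreme subset) of both F₁ and F₂. -/
open Set MeasureTheory Module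

section helpers

variable {E : Type*} [NormedAddCommGroup E] [NormedSpace ℝ E]

/-- Points of `interior B` arbitrarily close to any point of `B`. -/
private lemma exists_interior_near {B : Set E} (hB : Convex ℝ B) {w c : E}
    (hw : w ∈ B) (hc : c ∈ interior B) {ρ : ℝ} (hρ : 0 < ρ) :
    ∃ p, p ∈ interior B ∧ dist p w < ρ := by
  set θ : ℝ := min (1/2) (ρ / (2 * (‖c - w‖ + 1))) with hθdef
  have hcw : (0:ℝ) < ‖c - w‖ + 1 := by positivity
  have hθpos : 0 < θ := by
    apply lt_min (by norm_num)
    positivity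
  have hθle : θ ≤ ρ / (2 * (‖c - w‖ + 1)) := min_le_right _ _
  have hθ1 : θ ≤ 1/2 := min_le_left _ _
  refine ⟨θ • c + (1 - θ) • w, ?_, ?_⟩
  · exact hB.combo_interior_self_mem_interior hc hw hθpos (by linarith) (by ring)
  · have : θ • c + (1 - θ) • w - w = θ • (c - w) := by module
    rw [dist_eq_norm, this, norm_smul, Real.norm_eq_abs, abs_of_pos hθpos]
    calc θ * ‖c - w‖ ≤ (ρ / (2 * (‖c - w‖ + 1))) * ‖c - w‖ := by
          apply mul_le_mul_of_nonneg_right hθle (norm_nonneg _)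
      _ < ρ := by
          rw [div_mul_eq_mul_div, div_lt_iff₀ (by positivity)]
          nlinarith [norm_nonneg (c - w)]

/-- If a point lies in the interior of `A` and in `B`, and `B` is convex with
nonempty interior, then the interiors of `A` and `B` intersect. -/
private lemma interior_clash {A B : Set E} (hB : Convex ℝ B)
    (hdisj : interior A ∩ interior B = ∅) (hBi : (interior B).Nonempty)
    {p : E} (hpA : p ∈ interior A) (hpB : p ∈ B) : False := by
  obtain ⟨c, hc⟩ := hBi
  obtain ⟨ρ, hρ, hball⟩ := Metric.isOpen_iff.1 isOpen_interior p hpA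
  obtain ⟨q, hq, hqd⟩ := exists_interior_near hB hpB hc hρ
  have : q ∈ interior A ∩ interior B := ⟨hball (by simpa [Metric.mem_ball] using hqd), hq⟩
  rw [hdisj] at this
  exact this

end helpers

set_option maxHeartbeats 4000000

/-- Let `𝔑 ⊆ ℝʳ` be a closed convex polytope of dimension `r`, decomposed into finitely many
convex polytopal chambers of dimension `r` with pairwise disjoint interiors, such that any two
chambers whose intersection has dimension `r - 1` intersect in a common facet (a face of both).
Then the intersection of a face of any chamber with a face of any chamber is a face of both. -/
theorem face_inter_face_isExtreme (r : ℕ) (hr : 1 ≤ r)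
    (V : Finset (Fin r → ℝ)) (N : Set (Fin r → ℝ))
    (hN : N = convexHull ℝ (V : Set (Fin r → ℝ)))
    (hNtop : affineSpan ℝ N = ⊤)
    (ι : Type) [Fintype ι] (Ni : ι → Set (Fin r → ℝ)) (Vi : ι → Finset (Fin r → ℝ))
    (hNi : ∀ i, Ni i = convexHull ℝ ((Vi i : Set (Fin r → ℝ))))
    (hcover : ⋃ i, Ni i = N)
    (hdim : ∀ i, Module.finrank ℝ (vectorSpan ℝ (Ni i)) = r)
    (hdisj : ∀ i j, i ≠ j → interior (Ni i) ∩ interior (Ni j) = ∅)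
    (hfacet : ∀ i j, Module.finrank ℝ (vectorSpan ℝ (Ni i ∩ Ni j)) = r - 1 →
      IsExtreme ℝ (Ni i) (Ni i ∩ Ni j) ∧ IsExtreme ℝ (Ni j) (Ni i ∩ Ni j))
    (i j : ι) (F₁ F₂ : Set (Fin r → ℝ))
    (hF₁ : IsExtreme ℝ (Ni i) F₁) (hF₂ : IsExtreme ℝ (Ni j) F₂) :
    IsExtreme ℝ F₁ (F₁ ∩ F₂) ∧ IsExtreme ℝ F₂ (F₁ ∩ F₂) := by
  have hrE : Module.finrank ℝ (Fin r → ℝ) = r := Module.finrank_fin_fun ℝ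
  have hconvN : Convex ℝ N := hN ▸ convex_convexHull ℝ _
  have hconv : ∀ a, Convex ℝ (Ni a) := fun a => hNi a ▸ convex_convexHull ℝ _
  have hclosed : ∀ a, IsClosed (Ni a) := fun a =>
    hNi a ▸ ((Vi a).finite_toSet.isCompact_convexHull ℝ).isClosed
  have memN : ∀ a, Ni a ⊆ N := fun a => hcover ▸ Set.subset_iUnion Ni a
  -- every chamber is full-dimensional, hence has nonempty interior
  have htop : ∀ (s : Set (Fin r → ℝ)), s.Nonempty →
      Module.finrank ℝ (vectorSpan ℝ s) = r → affineSpan ℝ s = ⊤ := by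
    intro s hs hrk
    rw [AffineSubspace.affineSpan_eq_top_iff_vectorSpan_eq_top_of_nonempty ℝ (Fin r → ℝ) (Fin r → ℝ) hs]
    exact Submodule.eq_top_of_finrank_eq (by rw [hrk, hrE])
  have hne : ∀ a, (Ni a).Nonempty := by
    intro a
    rcases (Ni a).eq_empty_or_nonempty with h | h
    · exfalso
      have := hdim a
      rw [h, vectorSpan_empty, finrank_bot] at this
      omega
    · exact h
  have hint : ∀ a, (interior (Ni a)).Nonempty := fun a =>
    ((hconv a).interior_nonempty_iff_affineSpan_eq_top).2 (htop _ (hne a) (hdim a))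
  -- a point in the interior of one chamber belongs to no other chamber
  have hid : ∀ {a b : ι} {p : Fin r → ℝ}, p ∈ interior (Ni a) → p ∈ Ni b → a = b := by
    intro a b p hpa hpb
    by_contra hab
    exact interior_clash (hconv b) (hdisj a b hab) (hint b) hpa hpb
  -- THE KEY LEMMA
  have key : ∀ (a b : ι) (x y z : Fin r → ℝ), x ∈ Ni a → y ∈ Ni a → z ∈ Ni b →
      z ∈ openSegment ℝ x y → x ∈ Ni b := by
    intro a b x y z hx hy hzb hseg
    by_cases hxy : x = y
    · subst hxy
      rw [openSegment_same, mem_singleton_iff] at hseg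
      exact hseg ▸ hzb
    obtain ⟨s, t, hs, ht, hst, hzeq⟩ := hseg
    have ht' : t = 1 - s := by linarith
    subst ht'
    set d : Fin r → ℝ := x - z with hd
    have hdeq : d = (1 - s) • (x - y) := by
      rw [hd, ← hzeq]; module
    have hdne : d ≠ 0 := by
      rw [hdeq]
      exact smul_ne_zero (by linarith) (sub_ne_zero.mpr hxy)
    -- the segment `z + u • d`, `u ∈ [-s/(1-s), 1]`, lies in `Ni a`
    have hrange : ∀ u : ℝ, -(s/(1-s)) ≤ u → u ≤ 1 → z + u • d ∈ Ni a := by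
      intro u h1 h2
      have heq : z + u • d = (s + u * (1-s)) • x + ((1-s) - u * (1-s)) • y := by
        rw [hdeq, ← hzeq]; module
      rw [heq]
      have hs1 : (0:ℝ) < 1 - s := ht
      refine hconv a hx hy ?_ ?_ (by ring)
      · have h3 := mul_le_mul_of_nonneg_right h1 (le_of_lt hs1)
        rw [neg_mul, div_mul_cancel₀ _ (ne_of_gt hs1)] at h3
        linarith
      · nlinarith
    set T : Set ℝ := Icc (0:ℝ) 1 ∩ (fun u : ℝ => z + u • d) ⁻¹' (Ni b) with hT
    have hcont : Continuous (fun u : ℝ => z + u • d) :=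
      continuous_const.add (continuous_id.smul continuous_const)
    have hT0 : (0:ℝ) ∈ T := ⟨⟨le_refl _, zero_le_one⟩, by simp [hzb]⟩
    have hTbdd : BddAbove T := ⟨1, fun u hu => hu.1.2⟩
    have hTclosed : IsClosed T := isClosed_Icc.inter ((hclosed b).preimage hcont)
    set tm : ℝ := sSup T with htm
    have htmem : tm ∈ T := hTclosed.csSup_mem ⟨0, hT0⟩ hTbdd
    have htm0 : 0 ≤ tm := le_csSup hTbdd hT0
    have htm1 : tm ≤ 1 := htmem.1.2
    -- we claim `tm = 1`
    suffices hsuff : tm = 1 by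
      have := htmem.2
      simp only [mem_preimage, hsuff] at this
      rw [hd] at this
      simpa using this
    by_contra hne1
    have htlt : tm < 1 := lt_of_le_of_ne htm1 hne1
    set w : Fin r → ℝ := z + tm • d with hw
    have hwa : w ∈ Ni a := hrange tm (by
      have hs1 : (0:ℝ) < 1 - s := ht
      have h4 : (0:ℝ) ≤ s/(1-s) := by positivity
      linarith) htm1
    have hwb : w ∈ Ni b := htmem.2
    -- "Good" chambers: those containing a small symmetric segment at `w` in direction `d`
    set Good : ι → Prop := fun c => ∃ ε : ℝ, 0 < ε ∧ w + ε • d ∈ Ni c ∧ w - ε • d ∈ Ni c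
      with hGood
    have hGa : Good a := by
      refine ⟨min ((1 - tm)/2) (s/(2*(1-s))), ?_, ?_, ?_⟩
      · apply lt_min
        · linarith
        · have : (0:ℝ) < 1 - s := ht
          positivity
      · have h1 : w + (min ((1 - tm)/2) (s/(2*(1-s)))) • d
            = z + (tm + min ((1 - tm)/2) (s/(2*(1-s)))) • d := by
          rw [hw]; module
        rw [h1]
        refine hrange _ ?_ ?_
        · have h2 : (0:ℝ) < min ((1 - tm)/2) (s/(2*(1-s))) := by
            apply lt_min
            · linarith
            · have : (0:ℝ) < 1 - s := ht
              positivity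
          have h3 : (0:ℝ) ≤ s / (1-s) := by
            have : (0:ℝ) < 1 - s := ht
            positivity
          linarith
        · have := min_le_left ((1 - tm)/2) (s/(2*(1-s)))
          linarith
      · have h1 : w - (min ((1 - tm)/2) (s/(2*(1-s)))) • d
            = z + (tm - min ((1 - tm)/2) (s/(2*(1-s)))) • d := by
          rw [hw]; module
        rw [h1]
        refine hrange _ ?_ ?_
        · have h2 := min_le_right ((1 - tm)/2) (s/(2*(1-s)))
          have hs1 : (0:ℝ) < 1 - s := ht
          have : s/(2*(1-s)) ≤ s/(1-s) := by
            rw [div_le_div_iff₀ (by positivity) hs1]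
            nlinarith
          linarith
        · have h2 : (0:ℝ) < min ((1 - tm)/2) (s/(2*(1-s)))  := by
            apply lt_min
            · linarith
            · have : (0:ℝ) < 1 - s := ht
              positivity
          linarith
    have hGb : ¬ Good b := by
      rintro ⟨ε, hε, h1, h2⟩
      set u : ℝ := min (tm + ε) 1 with hu
      have hu0 : 0 ≤ u := le_min (by linarith) zero_le_one
      have huem : u ∈ T := by
        refine ⟨⟨hu0, min_le_right _ _⟩, ?_⟩
        have hne0 : (0:ℝ) < tm + ε := by linarith
        have hmm : (1 - u/(tm+ε)) • z + (u/(tm+ε)) • (z + (tm+ε) • d)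
            = z + ((u/(tm+ε))*(tm+ε)) • d := by module
        have hμ : z + u • d = (1 - u/(tm+ε)) • z + (u/(tm+ε)) • (z + (tm+ε) • d) := by
          rw [hmm, div_mul_cancel₀ _ (ne_of_gt hne0)]
        have hz' : z + (tm + ε) • d = w + ε • d := by rw [hw]; module
        simp only [mem_preimage]
        rw [hμ, hz']
        have hpos : (0:ℝ) < tm + ε := by linarith
        refine hconv b hzb h1 ?_ ?_ (by ring)
        · have : u / (tm + ε) ≤ 1 := by
            rw [div_le_one hpos]
            exact min_le_left _ _
          linarith
        · positivity
      have h3 : u ≤ tm := le_csSup hTbdd huem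
      have h4 : tm < u := lt_min (by linarith) htlt
      linarith
    -- radius `ρ`: all chambers meeting `ball w ρ` contain `w`
    have hWclosed : IsClosed (⋃ c : {c : ι // w ∉ Ni c}, Ni c) :=
      isClosed_iUnion_of_finite (fun c => hclosed c)
    have hwW : w ∈ (⋃ c : {c : ι // w ∉ Ni c}, Ni c)ᶜ := by
      simp only [mem_compl_iff, mem_iUnion]
      rintro ⟨c, hc⟩
      exact c.2 hc
    obtain ⟨ρ, hρpos, hρball⟩ := Metric.isOpen_iff.1 hWclosed.isOpen_compl w hwW
    have hball : ∀ p : Fin r → ℝ, p ∈ Metric.ball w ρ → ∀ c, p ∈ Ni c → w ∈ Ni c := by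
      intro p hp c hpc
      by_contra hwc
      exact (hρball hp) (mem_iUnion.2 ⟨⟨c, hwc⟩, hpc⟩)
    -- bad pairs have low-dimensional intersections; avoid them
    set BadP : Set (Fin r → ℝ) := ⋃ q : ι × ι,
      (if Module.finrank ℝ (vectorSpan ℝ (Ni q.1 ∩ Ni q.2)) + 1 < r then
        (affineSpan ℝ (Ni q.1 ∩ Ni q.2) : Set (Fin r → ℝ)) else ∅) with hBadP
    have hBadPnull : volume BadP = 0 := by
      refine measure_iUnion_null fun q => ?_
      split_ifs with h
      · refine Measure.addHaar_affineSubspace _ _ (fun htop' => ?_)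
        have : Module.finrank ℝ (vectorSpan ℝ (Ni q.1 ∩ Ni q.2)) = r := by
          rw [← direction_affineSpan, htop', AffineSubspace.direction_top, finrank_top, hrE]
        omega
      · simp
    -- pick `P` generic in `interior (Ni a) ∩ ball w ρ`
    have hO1 : ((interior (Ni a) ∩ Metric.ball w ρ) \ BadP).Nonempty := by
      by_contra hcon
      rw [not_nonempty_iff_eq_empty, diff_eq_empty] at hcon
      obtain ⟨p0, hp0, hp0d⟩ := exists_interior_near (hconv a) hwa (hint a).some_mem hρpos
      have hopen : IsOpen (interior (Ni a) ∩ Metric.ball w ρ) :=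
        isOpen_interior.inter Metric.isOpen_ball
      have hpos := hopen.measure_pos volume ⟨p0, hp0, by simpa [Metric.mem_ball] using hp0d⟩
      have := measure_mono_null hcon hBadPnull
      rw [this] at hpos
      exact lt_irrefl _ hpos
    obtain ⟨P, ⟨hPa, hPball⟩, hPbad⟩ := hO1
    -- pick `Q` generic in `interior (Ni b) ∩ ball w ρ`
    set BadQ : Set (Fin r → ℝ) := ⋃ q : ι × ι,
      (if Module.finrank ℝ (vectorSpan ℝ (Ni q.1 ∩ Ni q.2)) + 1 < r then
        (affineSpan ℝ (insert P (Ni q.1 ∩ Ni q.2)) : Set (Fin r → ℝ)) else ∅) with hBadQ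
    have hBadQnull : volume BadQ = 0 := by
      refine measure_iUnion_null fun q => ?_
      split_ifs with h
      · refine Measure.addHaar_affineSubspace _ _ (fun htop' => ?_)
        have h1 : Module.finrank ℝ (vectorSpan ℝ (insert P (Ni q.1 ∩ Ni q.2))) = r := by
          rw [← direction_affineSpan, htop', AffineSubspace.direction_top, finrank_top, hrE]
        have h2 := finrank_vectorSpan_insert_le_set ℝ (Ni q.1 ∩ Ni q.2) P
        omega
      · simp
    have hO2 : ((interior (Ni b) ∩ Metric.ball w ρ) \ BadQ).Nonempty := by
      by_contra hcon
      rw [not_nonempty_iff_eq_empty, diff_eq_empty] at hcon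
      obtain ⟨q0, hq0, hq0d⟩ := exists_interior_near (hconv b) hwb (hint b).some_mem hρpos
      have hopen : IsOpen (interior (Ni b) ∩ Metric.ball w ρ) :=
        isOpen_interior.inter Metric.isOpen_ball
      have hpos := hopen.measure_pos volume ⟨q0, hq0, by simpa [Metric.mem_ball] using hq0d⟩
      have := measure_mono_null hcon hBadQnull
      rw [this] at hpos
      exact lt_irrefl _ hpos
    obtain ⟨Q, ⟨hQb, hQball⟩, hQbad⟩ := hO2
    -- the segment from `P` to `Q` avoids all low-dimensional pairwise intersections
    have havoid : ∀ c c' : ι,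
        Module.finrank ℝ (vectorSpan ℝ (Ni c ∩ Ni c')) + 1 < r →
        ∀ μ : ℝ, μ ∈ Icc (0:ℝ) 1 → P + μ • (Q - P) ∉ Ni c ∩ Ni c' := by
      intro c c' hlow μ hμ hmem
      rcases eq_or_lt_of_le hμ.1 with hμ0 | hμ0
      · apply hPbad
        rw [hBadP]
        refine mem_iUnion.2 ⟨(c, c'), ?_⟩
        rw [if_pos hlow]
        have : P + μ • (Q - P) = P := by rw [← hμ0]; simp
        rw [this] at hmem
        exact subset_affineSpan ℝ _ hmem
      · apply hQbad
        rw [hBadQ]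
        refine mem_iUnion.2 ⟨(c, c'), ?_⟩
        rw [if_pos hlow]
        have hPmem : P ∈ affineSpan ℝ (insert P (Ni c ∩ Ni c')) :=
          subset_affineSpan ℝ _ (mem_insert _ _)
        have hpmem : P + μ • (Q - P) ∈ affineSpan ℝ (insert P (Ni c ∩ Ni c')) :=
          subset_affineSpan ℝ _ (mem_insert_of_mem _ hmem)
        have hQeq : Q = μ⁻¹ • ((P + μ • (Q - P)) -ᵥ P) +ᵥ P := by
          simp only [vsub_eq_sub, vadd_eq_add]
          rw [add_sub_cancel_left, smul_smul, inv_mul_cancel₀ (ne_of_gt hμ0), one_smul]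
          abel
        rw [hQeq]
        exact AffineSubspace.smul_vsub_vadd_mem _ _ hpmem hPmem hPmem
    -- the chamber sets along the segment
    set A : ι → Set ℝ := fun c => Icc (0:ℝ) 1 ∩ (fun μ : ℝ => P + μ • (Q - P)) ⁻¹' (Ni c)
      with hA
    have hAcont : Continuous (fun μ : ℝ => P + μ • (Q - P)) :=
      continuous_const.add (continuous_id.smul continuous_const)
    have hAclosed : ∀ c, IsClosed (A c) := fun c =>
      isClosed_Icc.inter ((hclosed c).preimage hAcont)
    set tG : Set ℝ := ⋃ c : {c : ι // Good c}, A c with htG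
    set tB : Set ℝ := ⋃ c : {c : ι // ¬ Good c}, A c with htB
    have htGclosed : IsClosed tG := isClosed_iUnion_of_finite (fun c => hAclosed c)
    have htBclosed : IsClosed tB := isClosed_iUnion_of_finite (fun c => hAclosed c)
    have hcov : Icc (0:ℝ) 1 ⊆ tG ∪ tB := by
      intro μ hμ
      have hmemN : P + μ • (Q - P) ∈ N := by
        have hPN : P ∈ N := memN a (interior_subset hPa)
        have hQN : Q ∈ N := memN b (interior_subset hQb)
        have : P + μ • (Q - P) = (1 - μ) • P + μ • Q := by module
        rw [this]
        exact hconvN hPN hQN (by linarith [hμ.2]) hμ.1 (by ring)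
      rw [← hcover] at hmemN
      obtain ⟨c, hc⟩ := mem_iUnion.1 hmemN
      by_cases hGc : Good c
      · exact Or.inl (mem_iUnion.2 ⟨⟨c, hGc⟩, hμ, hc⟩)
      · exact Or.inr (mem_iUnion.2 ⟨⟨c, hGc⟩, hμ, hc⟩)
    have h0G : (0:ℝ) ∈ Icc (0:ℝ) 1 ∩ tG := by
      refine ⟨⟨le_refl _, zero_le_one⟩, mem_iUnion.2 ⟨⟨a, hGa⟩, ⟨le_refl _, zero_le_one⟩, ?_⟩⟩
      simp only [mem_preimage]
      simpa using interior_subset hPa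
    by_cases hBne : (Icc (0:ℝ) 1 ∩ tB).Nonempty
    · -- a crossing point exists: derive a contradiction via the facet hypothesis
      obtain ⟨μ', hμ'⟩ := isPreconnected_closed_iff.1 isPreconnected_Icc tG tB
        htGclosed htBclosed hcov ⟨0, h0G⟩ hBne
      have hμIcc := hμ'.1
      have hμG := hμ'.2.1
      have hμB := hμ'.2.2
      obtain ⟨⟨c, hGc⟩, hcA⟩ := mem_iUnion.1 hμG
      obtain ⟨⟨c', hGc'⟩, hcA'⟩ := mem_iUnion.1 hμB
      have hcc' : c ≠ c' := by rintro rfl; exact hGc' hGc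
      set p' : Fin r → ℝ := P + μ' • (Q - P) with hp'
      have hp'c : p' ∈ Ni c := hcA.2
      have hp'c' : p' ∈ Ni c' := hcA'.2
      have hp'ball : p' ∈ Metric.ball w ρ := by
        have : p' = (1 - μ') • P + μ' • Q := by rw [hp']; module
        rw [this]
        exact (convex_ball w ρ) hPball hQball (by linarith [hμIcc.2]) hμIcc.1 (by ring)
      have hwc : w ∈ Ni c := hball _ hp'ball c hp'c
      have hwc' : w ∈ Ni c' := hball _ hp'ball c' hp'c'
      have hDle : Module.finrank ℝ (vectorSpan ℝ (Ni c ∩ Ni c')) ≤ r := by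
        have := Submodule.finrank_le (vectorSpan ℝ (Ni c ∩ Ni c'))
        rwa [hrE] at this
      rcases lt_trichotomy (Module.finrank ℝ (vectorSpan ℝ (Ni c ∩ Ni c')) + 1) r
        with hlow | heq | hhigh
      · exact havoid c c' hlow μ' hμIcc ⟨hp'c, hp'c'⟩
      · -- dimension r - 1 : common facet
        obtain ⟨hex1, _⟩ := hfacet c c' (by omega)
        obtain ⟨ε, hε, h1, h2⟩ := hGc
        have hwW : w ∈ Ni c ∩ Ni c' := ⟨hwc, hwc'⟩
        have hseg : w ∈ openSegment ℝ (w + ε • d) (w - ε • d) :=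
          ⟨1/2, 1/2, by norm_num, by norm_num, by norm_num, by module⟩
        have hres := hex1.2 h1 h2 hwW hseg
        exact hGc' ⟨ε, hε, hres.2, (hex1.2 h2 h1 hwW (by rwa [openSegment_symm] at hseg)).2⟩
      · -- dimension r : contradiction with disjoint interiors
        have hDr : Module.finrank ℝ (vectorSpan ℝ (Ni c ∩ Ni c')) = r := by omega
        have hconvI : Convex ℝ (Ni c ∩ Ni c') := (hconv c).inter (hconv c')
        have hii : (interior (Ni c ∩ Ni c')).Nonempty :=
          hconvI.interior_nonempty_iff_affineSpan_eq_top.2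
            (htop _ ⟨p', hp'c, hp'c'⟩ hDr)
        obtain ⟨pt, hpt⟩ := hii
        have : pt ∈ interior (Ni c) ∩ interior (Ni c') :=
          ⟨interior_mono inter_subset_left hpt, interior_mono inter_subset_right hpt⟩
        rw [hdisj c c' hcc'] at this
        exact this
    · -- no crossing: `Q ∈ Ni b` would be in a Good chamber, i.e. `b` is Good; contradiction
      have h1cov : (1:ℝ) ∈ tG ∪ tB := hcov ⟨zero_le_one, le_refl _⟩
      have h1G : (1:ℝ) ∈ tG := by
        rcases h1cov with h | h
        · exact h
        · exact absurd ⟨1, ⟨zero_le_one, le_refl _⟩, h⟩ hBne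
      obtain ⟨⟨c, hGc⟩, hcA⟩ := mem_iUnion.1 h1G
      have hQc : Q ∈ Ni c := by
        have := hcA.2
        simp only [mem_preimage, one_smul] at this
        have heq : P + (Q - P) = Q := by abel
        rwa [heq] at this
      have : b = c := hid hQb hQc
      exact hGb (this ▸ hGc)
  -- now assemble the final statement
  constructor
  · constructor
    · exact inter_subset_left
    · intro x₁ hx₁ x₂ hx₂ z hz hseg
      have hx₁i : x₁ ∈ Ni i := hF₁.1 hx₁
      have hx₂i : x₂ ∈ Ni i := hF₁.1 hx₂
      have hzj : z ∈ Ni j := hF₂.1 hz.2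
      have h1 : x₁ ∈ Ni j := key i j x₁ x₂ z hx₁i hx₂i hzj hseg
      have h2 : x₂ ∈ Ni j := key i j x₂ x₁ z hx₂i hx₁i hzj
        (by rwa [openSegment_symm] at hseg)
      have := hF₂.2 h1 h2 hz.2 hseg
      exact ⟨hx₁, this⟩
  · constructor
    · exact inter_subset_right
    · intro x₁ hx₁ x₂ hx₂ z hz hseg
      have hx₁j : x₁ ∈ Ni j := hF₂.1 hx₁
      have hx₂j : x₂ ∈ Ni j := hF₂.1 hx₂
      have hzi : z ∈ Ni i := hF₁.1 hz.1
      have h1 : x₁ ∈ Ni i := key j i x₁ x₂ z hx₁j hx₂j hzi hseg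
      have h2 : x₂ ∈ Ni i := key j i x₂ x₁ z hx₂j hx₁j hzi
        (by rwa [openSegment_symm] at hseg)
      have := hF₁.2 h1 h2 hz.1 hseg
      exact ⟨this, hx₁⟩
end
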